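/- Let (Γ, ψ) be a model of T_log, let Γ_0 be a divisible subgroup of Γ such that ψ(Γ_0 ∖ {0}) ⊆ Γ_0, s(Γ_0) ⊆ Γ_0, and p(γ) ∈ Γ_0 for every γ ∈ Γ_0 with p(γ) ≠ ∞ (these closure conditions hold, e.g., when Γ_0 underlies an elementary substructure), and let c_1, …, c_m ∈ Γ ∖ Γ_0. Set Γ_1 := Γ_0 + ℚc_1 + ⋯ + ℚc_m. Then the set p(Γ_1) ∖ p(Γ_0) (computed in Γ ∪ {∞}) has at most m + 1 elements. -/

import Mathlib

section Aux

variable {Γ : Type*} [AddCommGroup Γ] [LinearOrder Γ] [IsOrderedAddMonoid Γ]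

lemma psi_add_of_lt (ψ : Γ → Γ)
    (hAC1 : ∀ α β : Γ, α ≠ 0 → β ≠ 0 → α + β ≠ 0 → min (ψ α) (ψ β) ≤ ψ (α + β))
    (hneg : ∀ x : Γ, x ≠ 0 → ψ (-x) = ψ x)
    {x y : Γ} (hx : x ≠ 0) (hy : y ≠ 0) (hlt : ψ x < ψ y) :
    x + y ≠ 0 ∧ ψ (x + y) = ψ x := by
  have hne : x + y ≠ 0 := by
    intro h
    have hyx : y = -x := (neg_eq_of_add_eq_zero_right h).symm
    rw [hyx, hneg x hx] at hlt
    exact lt_irrefl _ hlt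
  have hlow : ψ x ≤ ψ (x + y) := by
    have := hAC1 x y hx hy hne
    rwa [min_eq_left hlt.le] at this
  refine ⟨hne, le_antisymm ?_ hlow⟩
  by_contra h'
  push_neg at h'
  have hx' : (x + y) + (-y) ≠ 0 := by rw [add_neg_cancel_right]; exact hx
  have := hAC1 (x + y) (-y) hne (neg_ne_zero.mpr hy) hx'
  rw [add_neg_cancel_right, hneg y hy] at this
  exact absurd this (not_le.mpr (lt_min h' hlt))

lemma psi_add_ne (ψ : Γ → Γ)
    (hAC1 : ∀ α β : Γ, α ≠ 0 → β ≠ 0 → α + β ≠ 0 → min (ψ α) (ψ β) ≤ ψ (α + β))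
    (hneg : ∀ x : Γ, x ≠ 0 → ψ (-x) = ψ x)
    {x y : Γ} (hx : x ≠ 0) (hy : y ≠ 0) (hne : ψ x ≠ ψ y) :
    x + y ≠ 0 ∧ (ψ (x + y) = ψ x ∨ ψ (x + y) = ψ y) := by
  rcases lt_or_gt_of_ne hne with h | h
  · obtain ⟨h1, h2⟩ := psi_add_of_lt ψ hAC1 hneg hx hy h
    exact ⟨h1, Or.inl h2⟩
  · obtain ⟨h1, h2⟩ := psi_add_of_lt ψ hAC1 hneg hy hx h
    rw [add_comm] at h1 h2
    exact ⟨h1, Or.inr h2⟩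

lemma psi_sum (ψ : Γ → Γ)
    (hAC1 : ∀ α β : Γ, α ≠ 0 → β ≠ 0 → α + β ≠ 0 → min (ψ α) (ψ β) ≤ ψ (α + β))
    (hneg : ∀ x : Γ, x ≠ 0 → ψ (-x) = ψ x)
    {ι : Type*} (J : Finset ι) (a : ι → Γ) :
    J.Nonempty → (∀ i ∈ J, a i ≠ 0) →
    (∀ i ∈ J, ∀ j ∈ J, i ≠ j → ψ (a i) ≠ ψ (a j)) →
    (∑ i ∈ J, a i) ≠ 0 ∧ ∃ i ∈ J, ψ (∑ i ∈ J, a i) = ψ (a i) := by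
  classical
  induction J using Finset.cons_induction with
  | empty => intro h; exact absurd h (by simp)
  | cons i J hi ih =>
    intro _ h0 hd
    rcases J.eq_empty_or_nonempty with rfl | hJ
    · refine ⟨by simpa using h0 i (Finset.mem_cons_self i _), i, Finset.mem_cons_self i _, by simp⟩
    · obtain ⟨hS0, j, hj, hψj⟩ := ih hJ
        (fun k hk => h0 k (Finset.mem_cons_of_mem hk))
        (fun k hk l hl hkl => hd k (Finset.mem_cons_of_mem hk) l (Finset.mem_cons_of_mem hl) hkl)
      have hai : a i ≠ 0 := h0 i (Finset.mem_cons_self i _)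
      have hne : ψ (a i) ≠ ψ (∑ k ∈ J, a k) := by
        rw [hψj]
        exact hd i (Finset.mem_cons_self i _) j (Finset.mem_cons_of_mem hj)
          (fun h => hi (h ▸ hj))
      obtain ⟨h1, h2⟩ := psi_add_ne ψ hAC1 hneg hai hS0 hne
      rw [Finset.sum_cons]
      refine ⟨h1, ?_⟩
      rcases h2 with h2 | h2
      · exact ⟨i, Finset.mem_cons_self i _, h2⟩
      · exact ⟨j, Finset.mem_cons_of_mem hj, h2.trans hψj⟩

end Aux

/-- Let (Γ, ψ) be a model of T_log: an H-asymptotic couple with Γ divisible,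
with asymptotic integration (∫ the integration map, s(α) := ψ(∫α)), such that,
with Ψ := ψ(Γ ∖ {0}):  Ψ has least element s(0) > 0, s(α) is the immediate
successor in Ψ of each α ∈ Ψ, and s : Ψ → Ψ^{>s(0)} is a bijection.  Let
p : Γ → Γ ∪ {∞} send α ∈ Ψ^{>s(0)} to the unique β ∈ Ψ with s(β) = α and
everything else to ∞.  Let Γ_0 be a divisible subgroup closed under ψ, s and
p (when p ≠ ∞), and c_1, …, c_m ∈ Γ ∖ Γ_0.  Then
p(Γ_0 + ℚc_1 + ⋯ + ℚc_m) ∖ p(Γ_0) has at most m + 1 elements. -/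
theorem finite_p_extension
    {Γ : Type*} [AddCommGroup Γ] [LinearOrder Γ] [IsOrderedAddMonoid Γ] [Module ℚ Γ]
    (ψ : Γ → Γ)
    (hAC1 : ∀ α β : Γ, α ≠ 0 → β ≠ 0 → α + β ≠ 0 → min (ψ α) (ψ β) ≤ ψ (α + β))
    (hAC2 : ∀ α : Γ, α ≠ 0 → ∀ k : ℤ, k ≠ 0 → ψ (k • α) = ψ α)
    (hAC3 : ∀ α β : Γ, 0 < α → β ≠ 0 → ψ β < α + ψ α)
    (hHC : ∀ α β : Γ, 0 < α → α ≤ β → ψ β ≤ ψ α)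
    (I : Γ → Γ) (hI : ∀ α : Γ, I α ≠ 0 ∧ I α + ψ (I α) = α)
    (hleast : IsLeast (ψ '' {x : Γ | x ≠ 0}) (ψ (I 0)))
    (hpos : (0 : Γ) < ψ (I 0))
    (hsucc : ∀ α ∈ ψ '' {x : Γ | x ≠ 0}, α < ψ (I α) ∧ ψ (I α) ∈ ψ '' {x : Γ | x ≠ 0} ∧
      ¬ ∃ β ∈ ψ '' {x : Γ | x ≠ 0}, α < β ∧ β < ψ (I α))
    (hbij : Set.BijOn (fun α => ψ (I α)) (ψ '' {x : Γ | x ≠ 0})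
      {β ∈ ψ '' {x : Γ | x ≠ 0} | ψ (I 0) < β})
    (p : Γ → WithTop Γ)
    (hp : ∀ α : Γ,
      (α ∈ ψ '' {x : Γ | x ≠ 0} → ψ (I 0) < α →
        ∃ β ∈ ψ '' {x : Γ | x ≠ 0}, ψ (I β) = α ∧ p α = (β : WithTop Γ)) ∧
      (¬ (α ∈ ψ '' {x : Γ | x ≠ 0} ∧ ψ (I 0) < α) → p α = ⊤))
    (Γ0 : Submodule ℚ Γ)
    (hψΓ0 : ∀ γ ∈ Γ0, γ ≠ 0 → ψ γ ∈ Γ0)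
    (hsΓ0 : ∀ γ ∈ Γ0, ψ (I γ) ∈ Γ0)
    (hpΓ0 : ∀ γ ∈ Γ0, ∀ β : Γ, p γ = (β : WithTop Γ) → β ∈ Γ0)
    (m : ℕ) (c : Fin m → Γ) (hc : ∀ i, c i ∉ Γ0) :
    (p '' {x | ∃ γ ∈ Γ0, ∃ q : Fin m → ℚ, x = γ + ∑ i, q i • c i} \
        p '' (Γ0 : Set Γ)).Finite ∧
    (p '' {x | ∃ γ ∈ Γ0, ∃ q : Fin m → ℚ, x = γ + ∑ i, q i • c i} \
        p '' (Γ0 : Set Γ)).ncard ≤ m + 1 := by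
  classical
  set Ψs : Set Γ := ψ '' {x : Γ | x ≠ 0} with hΨs
  have hneg : ∀ x : Γ, x ≠ 0 → ψ (-x) = ψ x := by
    intro x hx
    have := hAC2 x hx (-1) (by norm_num)
    simpa using this
  have hq : ∀ (r : ℚ) (x : Γ), r ≠ 0 → x ≠ 0 → ψ (r • x) = ψ x := by
    intro r x hr hx
    have hrx : r • x ≠ 0 := smul_ne_zero hr hx
    have hden : (r.den : ℤ) ≠ 0 := Int.natCast_ne_zero.mpr r.den_nz
    have hnum : (r.num : ℤ) ≠ 0 := Rat.num_ne_zero.mpr hr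
    have h1 : (r.den : ℤ) • (r • x) = (r.num : ℤ) • x := by
      rw [← Int.cast_smul_eq_zsmul ℚ, ← Int.cast_smul_eq_zsmul ℚ, smul_smul]
      congr 1
      push_cast
      rw [mul_comm, Rat.mul_den_eq_num]
    have h2 := hAC2 (r • x) hrx (r.den : ℤ) hden
    have h3 := hAC2 x hx (r.num : ℤ) hnum
    rw [h1, h3] at h2
    exact h2.symm
  have hsmem : ∀ t ∈ Ψs, ψ (I t) ∈ Ψs ∧ ψ (I 0) < ψ (I t) := by
    intro t ht
    have := hbij.mapsTo ht
    exact ⟨this.1, this.2⟩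
  have hsinj : ∀ t ∈ Ψs, ∀ t' ∈ Ψs, ψ (I t) = ψ (I t') → t = t' :=
    fun t ht t' ht' h => hbij.injOn ht ht' h
  have hsnot : ∀ t ∈ Ψs, t ∉ Γ0 → ψ (I t) ∉ Γ0 := by
    intro t ht htn hst
    obtain ⟨hstΨ, hstgt⟩ := hsmem t ht
    obtain ⟨β, hβΨ, hsβ, hpst⟩ := (hp (ψ (I t))).1 hstΨ hstgt
    have hβt : β = t := hsinj β hβΨ t ht hsβ
    exact htn (hβt ▸ hpΓ0 (ψ (I t)) hst β hpst)
  have hdiff : ∀ t ∈ Ψs, ∀ t' ∈ Ψs, t < t' → ψ (t' - t) = ψ (I t) := by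
    intro t ht t' ht' hlt
    have hIt : I t ≠ 0 := (hI t).1
    have hItt : I t + ψ (I t) = t := (hI t).2
    have hstt : t < ψ (I t) := (hsucc t ht).1
    have hgψ : ψ (ψ (I t) - t) = ψ (I t) := by
      have hg : ψ (I t) - t = -(I t) := by
        apply eq_neg_of_add_eq_zero_left
        calc ψ (I t) - t + I t = (I t + ψ (I t)) - t := by abel
          _ = t - t := by rw [hItt]
          _ = 0 := sub_self t
      rw [hg, hneg _ hIt]
    have hst' : ψ (I t) ≤ t' := by
      by_contra h
      push_neg at h
      exact (hsucc t ht).2.2 ⟨t', ht', hlt, h⟩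
    have hd0 : (0 : Γ) < t' - t := sub_pos.mpr hlt
    have hdne : t' - t ≠ 0 := ne_of_gt hd0
    have hub : ψ (t' - t) ≤ ψ (I t) := by
      have hgpos : (0 : Γ) < ψ (I t) - t := sub_pos.mpr hstt
      have hle : ψ (I t) - t ≤ t' - t := sub_le_sub_right hst' t
      have := hHC (ψ (I t) - t) (t' - t) hgpos hle
      rwa [hgψ] at this
    have hlb : t < ψ (t' - t) := by
      obtain ⟨b, hb, hbt⟩ := ht'
      have h1 := hAC3 (t' - t) b hd0 hb
      rw [hbt] at h1
      have h2 : t' - (t' - t) < ψ (t' - t) := sub_lt_iff_lt_add.mpr (by rwa [add_comm] at h1)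
      rwa [sub_sub_cancel] at h2
    have hmem : ψ (t' - t) ∈ Ψs := ⟨t' - t, hdne, rfl⟩
    rcases lt_or_eq_of_le hub with h | h
    · exact absurd ⟨ψ (t' - t), hmem, hlb, h⟩ (hsucc t ht).2.2
    · exact h
  set Γ1s : Set Γ := {x | ∃ γ ∈ Γ0, ∃ q : Fin m → ℚ, x = γ + ∑ i, q i • c i} with hΓ1s
  set D : Set Γ := {t | t ∈ Ψs ∧ t ∈ Γ1s ∧ t ∉ Γ0} with hD
  have key : ∀ F : Finset Γ, ↑F ⊆ D → F.card ≤ m + 1 := by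
    intro F hF
    by_contra hcard
    push_neg at hcard
    obtain ⟨G, hGF, hG⟩ := Finset.exists_subset_card_eq (s := F) (n := m + 2) (by omega)
    have hGD : (↑G : Set Γ) ⊆ D := fun x hx => hF (hGF hx)
    set t : Fin (m + 2) → Γ := fun i => ((G.orderIsoOfFin hG) i : Γ) with htdef
    have htmono : StrictMono t := by
      intro i j hij
      exact Subtype.coe_lt_coe.mpr ((G.orderIsoOfFin hG).lt_iff_lt.mpr hij)
    have htinj : Function.Injective t := htmono.injective
    have htD : ∀ i, t i ∈ D := fun i => hGD ((G.orderIsoOfFin hG) i).2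
    set mkQ := Γ0.mkQ with hmkQ
    set W : Submodule ℚ (Γ ⧸ Γ0) := Submodule.span ℚ (Set.range fun j => mkQ (c j)) with hW
    have hmemW : ∀ i, mkQ (t i) ∈ W := by
      intro i
      obtain ⟨-, ⟨γ, hγ, qv, hqv⟩, -⟩ := htD i
      rw [hqv, map_add, map_sum]
      have hγ0 : mkQ γ = 0 := (Submodule.Quotient.mk_eq_zero Γ0).2 hγ
      rw [hγ0, zero_add]
      refine Submodule.sum_mem _ fun j _ => ?_
      rw [map_smul]
      exact Submodule.smul_mem _ _ (Submodule.subset_span (Set.mem_range_self j))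
    have hWfin : FiniteDimensional ℚ W :=
      FiniteDimensional.span_of_finite ℚ (Set.finite_range _)
    have hWrank : Module.finrank ℚ W ≤ m := by
      have := finrank_range_le_card (R := ℚ) (fun j => mkQ (c j))
      simpa [Set.finrank, Fintype.card_fin] using this
    set L1 : (Fin (m + 2) → ℚ) →ₗ[ℚ] (Γ ⧸ Γ0) :=
      Fintype.linearCombination ℚ (fun i => mkQ (t i)) with hL1
    have hL1mem : ∀ f, L1 f ∈ W := by
      intro f
      rw [hL1, Fintype.linearCombination_apply]
      exact Submodule.sum_mem _ fun j _ => Submodule.smul_mem _ _ (hmemW j)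
    set L : (Fin (m + 2) → ℚ) →ₗ[ℚ] W × ℚ :=
      (L1.codRestrict W hL1mem).prod (Fintype.linearCombination ℚ (fun _ => (1 : ℚ)))
      with hLdef
    have hnotinj : ¬ Function.Injective L := by
      intro hinj
      have h1 := LinearMap.finrank_le_finrank_of_injective hinj
      rw [Module.finrank_fin_fun, Module.finrank_prod, Module.finrank_self] at h1
      omega
    rw [Function.not_injective_iff] at hnotinj
    obtain ⟨f1, f2, hf12, hfne⟩ := hnotinj
    set q : Fin (m + 2) → ℚ := f1 - f2 with hqdef
    have hq0 : q ≠ 0 := sub_ne_zero.mpr hfne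
    have hLq : L q = 0 := by rw [hqdef, map_sub, hf12, sub_self]
    have hL1q : L1 q = 0 := by
      have h1 := congrArg Prod.fst hLq
      have h2 := congrArg Subtype.val h1
      simpa [hLdef, LinearMap.codRestrict_apply] using h2
    have hsum0 : ∑ i, q i = 0 := by
      have := congrArg Prod.snd hLq
      simpa [hLdef, Fintype.linearCombination_apply] using this
    have hγ0mem : ∑ i, q i • t i ∈ Γ0 := by
      have h1 : mkQ (∑ i, q i • t i) = 0 := by
        rw [map_sum]
        simp only [map_smul]
        rw [hL1, Fintype.linearCombination_apply] at hL1q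
        exact hL1q
      rw [hmkQ, Submodule.mkQ_apply] at h1
      exact (Submodule.Quotient.mk_eq_zero Γ0).1 h1
    set γ0 : Γ := ∑ i, q i • t i with hγ0def
    set supp : Finset (Fin (m + 2)) := Finset.univ.filter (fun i => q i ≠ 0) with hsupp
    have hsne : supp.Nonempty := by
      rcases Function.ne_iff.mp hq0 with ⟨i, hi⟩
      refine ⟨i, ?_⟩
      simp only [hsupp, Finset.mem_filter, Finset.mem_univ, true_and]
      simpa using hi
    obtain ⟨i₀, hi₀supp, hi₀max⟩ := supp.exists_max_image t hsne
    have hsumsupp : ∀ (g : Fin (m + 2) → Γ), (∀ i, q i = 0 → g i = 0) →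
        ∑ i ∈ supp, g i = ∑ i, g i := by
      intro g hg
      refine Finset.sum_subset (Finset.filter_subset _ _) ?_
      intro i _ hi
      simp only [hsupp, Finset.mem_filter, Finset.mem_univ, true_and, not_not] at hi
      exact hg i hi
    set J : Finset (Fin (m + 2)) := supp.erase i₀ with hJ
    have hJne : J.Nonempty := by
      rw [Finset.nonempty_iff_ne_empty]
      intro hJe
      have hsing : supp = {i₀} := by
        rcases (Finset.erase_eq_empty_iff supp i₀).mp hJe with h | h
        · exact absurd h (Finset.nonempty_iff_ne_empty.mp hsne)
        · exact h
      have hqi₀ : q i₀ ≠ 0 := by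
        have h1 := hi₀supp
        simp only [hsupp, Finset.mem_filter, Finset.mem_univ, true_and] at h1
        exact h1
      have h2 : ∑ i ∈ supp, q i = 0 := by
        rw [Finset.sum_subset (Finset.filter_subset _ _) (fun i _ hi => by
          simp only [hsupp, Finset.mem_filter, Finset.mem_univ, true_and, not_not] at hi
          exact hi)]
        exact hsum0
      rw [hsing, Finset.sum_singleton] at h2
      exact hqi₀ h2
    have hsum_all : ∑ i ∈ supp, q i • t i = γ0 :=
      hsumsupp (fun i => q i • t i) (fun i hi => by simp [hi])
    have hsumq : ∑ i ∈ supp, q i = 0 := by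
      rw [Finset.sum_subset (Finset.filter_subset _ _) (fun i _ hi => by
        simp only [hsupp, Finset.mem_filter, Finset.mem_univ, true_and, not_not] at hi
        exact hi)]
      exact hsum0
    have e2 : ∑ i ∈ J, q i • t i = γ0 - q i₀ • t i₀ :=
      eq_sub_of_add_eq (by rw [hJ, Finset.sum_erase_add supp _ hi₀supp, hsum_all])
    have e3 : ∑ i ∈ J, q i = -(q i₀) :=
      eq_neg_of_add_eq_zero_left (by rw [hJ, Finset.sum_erase_add supp _ hi₀supp, hsumq])
    have hkey : ∑ i ∈ J, q i • (t i - t i₀) = γ0 := by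
      have e1 : ∑ i ∈ J, q i • (t i - t i₀)
          = (∑ i ∈ J, q i • t i) - (∑ i ∈ J, q i) • t i₀ := by
        rw [Finset.sum_smul, ← Finset.sum_sub_distrib]
        exact Finset.sum_congr rfl (fun i _ => smul_sub _ _ _)
      rw [e1, e2, e3, neg_smul, sub_neg_eq_add, sub_add_cancel]
    have hJfacts : ∀ i ∈ J, q i ≠ 0 ∧ t i < t i₀ := by
      intro i hi
      have hine : i ≠ i₀ := Finset.ne_of_mem_erase hi
      have himem : i ∈ supp := Finset.mem_of_mem_erase hi
      have hqi : q i ≠ 0 := by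
        simp only [hsupp, Finset.mem_filter, Finset.mem_univ, true_and] at himem
        exact himem
      have hle : t i ≤ t i₀ := hi₀max i (Finset.mem_of_mem_erase hi)
      exact ⟨hqi, lt_of_le_of_ne hle (fun h => hine (htinj h))⟩
    have hpsi_a : ∀ i ∈ J, ψ (q i • (t i - t i₀)) = ψ (I (t i)) := by
      intro i hi
      obtain ⟨hqi, hlt⟩ := hJfacts i hi
      have hne : t i - t i₀ ≠ 0 := sub_ne_zero.mpr (ne_of_lt hlt)
      rw [hq _ _ hqi hne]
      have hflip : t i - t i₀ = -(t i₀ - t i) := by abel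
      rw [hflip, hneg _ (sub_ne_zero.mpr (ne_of_gt hlt))]
      exact hdiff (t i) (htD i).1 (t i₀) (htD i₀).1 hlt
    have h0 : ∀ i ∈ J, q i • (t i - t i₀) ≠ 0 := by
      intro i hi
      obtain ⟨hqi, hlt⟩ := hJfacts i hi
      exact smul_ne_zero hqi (sub_ne_zero.mpr (ne_of_lt hlt))
    have hd : ∀ i ∈ J, ∀ j ∈ J, i ≠ j →
        ψ (q i • (t i - t i₀)) ≠ ψ (q j • (t j - t i₀)) := by
      intro i hi j hj hij
      rw [hpsi_a i hi, hpsi_a j hj]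
      intro heq
      exact hij (htinj (hsinj (t i) (htD i).1 (t j) (htD j).1 heq))
    obtain ⟨hγne, i, hiJ, hψγ⟩ := psi_sum ψ hAC1 hneg J (fun i => q i • (t i - t i₀)) hJne h0 hd
    rw [hkey] at hγne hψγ
    rw [hpsi_a i hiJ] at hψγ
    have hmemΓ0 : ψ γ0 ∈ Γ0 := hψΓ0 γ0 hγ0mem hγne
    rw [hψγ] at hmemΓ0
    exact hsnot (t i) (htD i).1 (htD i).2.2 hmemΓ0
  -- D is finite with at most m+1 elements
  have hDfin : D.Finite := by
    by_contra h
    obtain ⟨F, hFD, hFc⟩ := Set.Infinite.exists_subset_card_eq h (m + 2)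
    have := key F hFD
    omega
  have hDcard : D.ncard ≤ m + 1 := by
    rw [Set.ncard_eq_toFinset_card D hDfin]
    exact key _ (by simp)
  -- transfer to the target set via the injection x ↦ s(β) for x = β
  set S : Set (WithTop Γ) := p '' Γ1s \ p '' (Γ0 : Set Γ) with hS
  set f : WithTop Γ → Γ := fun x => ψ (I (x.untopD 0)) with hf
  have hSfact : ∀ x ∈ S, ∃ β : Γ, x = (β : WithTop Γ) ∧ β ∈ Ψs ∧ f x ∈ D := by
    intro x hx
    obtain ⟨⟨α, hα, hpα⟩, hnot⟩ := hx
    have hmem : α ∈ Ψs ∧ ψ (I 0) < α := by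
      by_contra h
      have hpt := (hp α).2 h
      apply hnot
      refine ⟨0, Γ0.zero_mem, ?_⟩
      rw [(hp 0).2 (fun hh => absurd hh.2 (not_lt.mpr hpos.le)), ← hpα, hpt]
    obtain ⟨β, hβΨ, hsβ, hpeq⟩ := (hp α).1 hmem.1 hmem.2
    have hxβ : x = (β : WithTop Γ) := by rw [← hpα, hpeq]
    have hαΓ0 : α ∉ Γ0 := fun hmem0 => hnot ⟨α, hmem0, hpα⟩
    refine ⟨β, hxβ, hβΨ, ?_⟩
    have hfx : f x = ψ (I β) := by rw [hxβ, hf]; simp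
    rw [hfx, hsβ]
    exact ⟨hmem.1, hα, hαΓ0⟩
  have hinjOn : Set.InjOn f S := by
    intro x hx x' hx' hxx'
    obtain ⟨β, hxβ, hβΨ, -⟩ := hSfact x hx
    obtain ⟨β', hxβ', hβ'Ψ, -⟩ := hSfact x' hx'
    have h1 : f x = ψ (I β) := by rw [hxβ, hf]; simp
    have h2 : f x' = ψ (I β') := by rw [hxβ', hf]; simp
    rw [h1, h2] at hxx'
    rw [hxβ, hxβ', hsinj β hβΨ β' hβ'Ψ hxx']
  have himg : f '' S ⊆ D := by
    rintro y ⟨x, hx, rfl⟩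
    obtain ⟨β, hxβ, hβΨ, hfD⟩ := hSfact x hx
    exact hfD
  have hSfin : S.Finite := Set.Finite.of_finite_image (hDfin.subset himg) hinjOn
  refine ⟨hSfin, ?_⟩
  calc S.ncard = (f '' S).ncard := (Set.ncard_image_of_injOn hinjOn).symm
    _ ≤ D.ncard := Set.ncard_le_ncard himg hDfin
    _ ≤ m + 1 := hDcard
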